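/- arXiv:2508.02367 — 4 statements merged into one kernel-verified Lean document; each statement's English description precedes it below -/
import Mathlib

section
/- Let H be a complex vector space with a nondegenerate Hermitian form B (antilinear in the first variable), and let π be a representation of a group G on H preserving B. Let f, h ∈ H with B(f, h) = 0, and suppose g ∈ G satisfies π(g)f = α·f + (1−α²)·h and π(g)h = f − α·h for some α ∈ ℂ. If B(h,h) ≠ 0, then B(f,f) = (1 − |α|²)·B(h,h) and moreover ᾱ = α, i.e., α ∈ ℝ. -/
open ComplexConjugate

/-- Algebraic core of Lemma 5.3: if `g` acts on `span{f,h}` by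
`g·f = α f + (1−α²) h`, `g·h = f − α h` and preserves the nondegenerate Hermitian
form `B` with `B f h = 0` and `B h h ≠ 0`, then `B f f = (1 − |α|²) B h h` and `α`
is real. -/
theorem stmt_7 {G : Type*} [Group G] {H : Type*} [AddCommGroup H] [Module ℂ H]
    (B : H → H → ℂ)
    (haddl : ∀ v w u : H, B (v + w) u = B v u + B w u)
    (haddr : ∀ v w u : H, B v (w + u) = B v w + B v u)
    (hsmul : ∀ (c : ℂ) (v w : H), B v (c • w) = c * B v w)
    (hherm : ∀ v w : H, B v w = conj (B w v))
    (hnondeg : ∀ v : H, (∀ w : H, B v w = 0) → v = 0)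
    (π : Representation ℂ G H)
    (hinv : ∀ (g : G) (v w : H), B (π g v) (π g w) = B v w)
    (f h : H) (α : ℂ) (g : G)
    (horth : B f h = 0)
    (hgf : π g f = α • f + (1 - α ^ 2) • h)
    (hgh : π g h = f - α • h)
    (hne : B h h ≠ 0) :
    B f f = (1 - conj α * α) * B h h ∧ conj α = α := by
  have hhf : B h f = 0 := by rw [hherm, horth, map_zero]
  have hsmull : ∀ (c : ℂ) (v w : H), B (c • v) w = conj c * B v w := fun c v w => by
    rw [hherm, hsmul, map_mul, ← hherm]
  have hsubr : ∀ v w u : H, B v (w - u) = B v w - B v u := fun v w u => by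
    rw [sub_eq_add_neg, ← neg_one_smul ℂ u, haddr, hsmul]; ring
  have hsubl : ∀ v w u : H, B (v - w) u = B v u - B w u := fun v w u => by
    rw [hherm, hsubr, map_sub, ← hherm, ← hherm]
  have e1 := hinv g h h
  rw [hgh] at e1
  simp only [hsubl, hsubr, hsmull, hsmul, horth, hhf] at e1
  have hff : B f f = (1 - conj α * α) * B h h := by
    have : B f f - (conj α * (0 - α * B h h) + 0) = B h h := by linear_combination e1
    linear_combination this
  refine ⟨hff, ?_⟩
  have e2 := hinv g f h
  rw [hgf, hgh] at e2
  simp only [haddl, hsubl, hsubr, hsmull, hsmul, horth, hhf, hff] at e2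
  have key : (conj α - α) * B h h = 0 := by
    have hca : conj (α ^ 2) = conj α ^ 2 := by rw [map_pow]
    have h1 : conj (1 - α ^ 2) = 1 - conj α ^ 2 := by rw [map_sub, map_one, hca]
    rw [h1] at e2
    linear_combination e2
  rcases mul_eq_zero.mp key with h0 | h0
  · exact sub_eq_zero.mp h0
  · exact absurd h0 hne
end

section
/- Let H be a complex vector space with a Hermitian form B (antilinear in the first variable), and π a representation of G on H preserving B. Let f, h ∈ H with B(f,h) = 0 and B(f,f) ≠ 0, and suppose g ∈ G satisfies π(g)f = α·f + (1−α)·h and π(g)h = (1+α)·f − α·h for some α ∈ ℂ. Then |1−α|²·B(h,h) = (1−|α|²)·B(f,f), and ᾱ(1+α)·B(f,f) = (1−ᾱ)·α·B(h,h); together these imply ᾱ = α, i.e., α ∈ ℝ. -/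
open ComplexConjugate

/-- Computational heart of Lemma 6.4 (non-transitive case): if `g` acts on
`span{f,h}` by `g·f = α f + (1−α) h`, `g·h = (1+α) f − α h` and preserves the
Hermitian form `B`, with `B f h = 0` and `B f f ≠ 0`, then
`|1−α|² B h h = (1−|α|²) B f f`, `ᾱ(1+α) B f f = (1−ᾱ) α B h h`, and `α` is real. -/
theorem stmt_8 {G : Type*} [Group G] {H : Type*} [AddCommGroup H] [Module ℂ H]
    (B : H → H → ℂ)
    (haddl : ∀ v w u : H, B (v + w) u = B v u + B w u)
    (haddr : ∀ v w u : H, B v (w + u) = B v w + B v u)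
    (hsmul : ∀ (c : ℂ) (v w : H), B v (c • w) = c * B v w)
    (hherm : ∀ v w : H, B v w = conj (B w v))
    (π : Representation ℂ G H)
    (hinv : ∀ (g : G) (v w : H), B (π g v) (π g w) = B v w)
    (f h : H) (α : ℂ) (g : G)
    (horth : B f h = 0)
    (hgf : π g f = α • f + (1 - α) • h)
    (hgh : π g h = (1 + α) • f - α • h)
    (hne : B f f ≠ 0) :
    conj (1 - α) * (1 - α) * B h h = (1 - conj α * α) * B f f ∧
      conj α * (1 + α) * B f f = (1 - conj α) * α * B h h ∧
      conj α = α := by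
  have hcsmul : ∀ (c : ℂ) (v w : H), B (c • v) w = conj c * B v w := by
    intro c v w
    rw [hherm, hsmul, map_mul, ← hherm]
  have hhf : B h f = 0 := by rw [hherm, horth, map_zero]
  have hgh' : π g h = (1 + α) • f + (-α) • h := by
    rw [hgh, sub_eq_add_neg, neg_smul]
  have E1 := hinv g f f
  have E2 := hinv g f h
  have E3 := hinv g h h
  rw [hgf] at E1 E2
  rw [hgh'] at E2 E3
  simp only [haddl, haddr, hcsmul, hsmul, horth, hhf, map_sub, map_add, map_one, map_neg,
    mul_zero, add_zero, zero_add] at E1 E2 E3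
  have key : (α - conj α) ^ 2 * B f f = 0 := by
    linear_combination (conj α * α - 1) * E1 + (conj α - 1) * (1 - α) * E3
  have hsq : (α - conj α) ^ 2 = 0 := by
    rcases mul_eq_zero.mp key with h' | h'
    · exact h'
    · exact absurd h' hne
  have hα : conj α = α := by
    have h2 := pow_eq_zero_iff (n := 2) (by norm_num) |>.mp hsq
    exact (sub_eq_zero.mp h2).symm
  refine ⟨?_, ?_, hα⟩
  · simp only [map_sub, map_one]
    linear_combination E1
  · linear_combination E2
end

section
/- Let d ≥ 3 and α ∈ ℝ. Let f, h span a 2-dimensional real vector space, and let g act by g·f = α·f + (1−α²)·h, g·h = f − α·h. Let Q be the bilinear form with Q(f,f) = (d/(d−1))(1−α²), Q(h,h) = d/(d−1), Q(f,h) = 0. Then g preserves Q: Q(g·f, g·f) = Q(f,f), Q(g·h, g·h) = Q(h,h), and Q(g·f, g·h) = 0. Moreover g² acts as the identity on span{f,h}. -/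
/-- The invariant form `Q` of Section 5, restricted to `span{f,h}`, is preserved by
the order-two element `g`, and `g²` acts as the identity on `span{f,h}`. -/
theorem stmt_11 {V : Type*} [AddCommGroup V] [Module ℝ V]
    (d : ℕ) (hd : 3 ≤ d) (α : ℝ) (f h : V) (g : V →ₗ[ℝ] V)
    (Q : V →ₗ[ℝ] V →ₗ[ℝ] ℝ)
    (hQsymm : ∀ v w : V, Q v w = Q w v)
    (hgf : g f = α • f + (1 - α ^ 2) • h)
    (hgh : g h = f - α • h)
    (hQff : Q f f = ((d : ℝ) / ((d : ℝ) - 1)) * (1 - α ^ 2))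
    (hQhh : Q h h = (d : ℝ) / ((d : ℝ) - 1))
    (hQfh : Q f h = 0) :
    Q (g f) (g f) = Q f f ∧ Q (g h) (g h) = Q h h ∧ Q (g f) (g h) = 0 ∧
      g (g f) = f ∧ g (g h) = h := by
  have hQhf : Q h f = 0 := by rw [← hQsymm]; exact hQfh
  refine ⟨?_, ?_, ?_, ?_, ?_⟩
  · simp only [hgf, map_add, map_smul, map_sub, LinearMap.add_apply, LinearMap.smul_apply,
      smul_eq_mul, hQff, hQhh, hQfh, hQhf]
    ring
  · simp only [hgh, map_add, map_smul, map_sub, LinearMap.add_apply, LinearMap.sub_apply,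
      LinearMap.smul_apply, smul_eq_mul, hQff, hQhh, hQfh, hQhf]
    ring
  · simp only [hgf, hgh, map_add, map_smul, map_sub, LinearMap.add_apply, LinearMap.sub_apply,
      LinearMap.smul_apply, smul_eq_mul, hQff, hQhh, hQfh, hQhf]
    ring
  · rw [hgf, map_add, map_smul, map_smul, hgf, hgh]
    module
  · rw [hgh, map_sub, map_smul, hgf, hgh]
    module
end

section
/- Let G ≤ Aut(T) act transitively on the vertices of a tree T and let o be a vertex with stabilizer K. Then for every vertex v, the double coset K g K (where g·o = v) equals {h ∈ G : d(h·o, o) = d(v, o)}, provided K acts transitively on each sphere Sₙ around o. Consequently, d(g⁻¹·o, o) = d(o, g·o) implies g⁻¹ ∈ K g K for every g ∈ G. -/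
/-- Amann's criterion: if `G` acts transitively by isometries on (the vertices of) a
tree `T` and the stabilizer `K` of a base vertex `o` acts transitively on each sphere
around `o`, then for every vertex `v` and every `g` with `g • o = v`, the double coset
`K g K` is exactly `{h : d(h•o, o) = d(v, o)}`; consequently `g⁻¹ ∈ K g K` for all `g`. -/
theorem stmt_17 {V : Type*} (T : SimpleGraph V) (hconn : T.Connected)
    (hacyc : T.IsAcyclic)
    {G : Type*} [Group G] [MulAction G V]
    (hiso : ∀ (g : G) (u v : V), T.dist (g • u) (g • v) = T.dist u v)
    (o : V)
    (htrans : ∀ v : V, ∃ g : G, g • o = v)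
    (K : Subgroup G) (hK : K = MulAction.stabilizer G o)
    (hsph : ∀ u w : V, T.dist o u = T.dist o w → ∃ k ∈ K, k • u = w) :
    (∀ (g : G) (v : V), g • o = v →
      {h : G | T.dist (h • o) o = T.dist v o} =
        {h : G | ∃ k₁ ∈ K, ∃ k₂ ∈ K, h = k₁ * g * k₂}) ∧
      ∀ g : G, ∃ k₁ ∈ K, ∃ k₂ ∈ K, g⁻¹ = k₁ * g * k₂ := by
  have main : ∀ (g : G) (v : V), g • o = v →
      {h : G | T.dist (h • o) o = T.dist v o} =
        {h : G | ∃ k₁ ∈ K, ∃ k₂ ∈ K, h = k₁ * g * k₂} := by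
    intro g v hv
    ext h
    simp only [Set.mem_setOf_eq]
    constructor
    · intro hd
      have hd' : T.dist o (h • o) = T.dist o (g • o) := by
        rw [T.dist_comm, hd, hv, T.dist_comm]
      obtain ⟨k, hk, hko⟩ := hsph (h • o) (g • o) hd'
      have hstab : g⁻¹ * (k * h) ∈ K := by
        rw [hK]
        simp only [MulAction.mem_stabilizer_iff, mul_smul]
        rw [hko]
        simp
      refine ⟨k⁻¹, K.inv_mem hk, g⁻¹ * (k * h), hstab, ?_⟩
      group
    · rintro ⟨k₁, hk₁, k₂, hk₂, rfl⟩
      have h1 : k₂ • o = o := by rw [hK] at hk₂; exact hk₂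
      have h2 : k₁ • o = o := by rw [hK] at hk₁; exact hk₁
      calc T.dist ((k₁ * g * k₂) • o) o
          = T.dist (k₁ • (g • o)) (k₁ • o) := by rw [mul_smul, mul_smul, h1, h2]
        _ = T.dist (g • o) o := hiso _ _ _
        _ = T.dist v o := by rw [hv]
  refine ⟨main, fun g => ?_⟩
  have := main g (g • o) rfl
  have hmem : g⁻¹ ∈ {h : G | T.dist (h • o) o = T.dist (g • o) o} := by
    simp only [Set.mem_setOf_eq]
    calc T.dist (g⁻¹ • o) o = T.dist (g • g⁻¹ • o) (g • o) := (hiso g _ _).symm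
      _ = T.dist o (g • o) := by rw [smul_inv_smul]
      _ = T.dist (g • o) o := T.dist_comm ..
  rw [this] at hmem
  exact hmem
end
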